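/- Let P, Q ∈ B_A(H). Then ω_𝔸([[P,Q],[0,0]]) ≤ √( min{‖P+Q‖_A², ‖P−Q‖_A²} + 2ω_A(PQ^{♯_A}) ). -/

import Mathlib

open ContinuousLinearMap

/-- The `A`-seminorm of a vector: `‖x‖_A = √⟨Ax, x⟩`. -/
noncomputable def vnormA {H : Type*} [NormedAddCommGroup H] [InnerProductSpace ℂ H]
    (A : H →L[ℂ] H) (x : H) : ℝ :=
  Real.sqrt (RCLike.re (inner ℂ (A x) x : ℂ))

/-- `T` is `A`-bounded, i.e. `T ∈ B_{A^{1/2}}(H)`. -/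
def ABounded {H : Type*} [NormedAddCommGroup H] [InnerProductSpace ℂ H]
    (A T : H →L[ℂ] H) : Prop :=
  ∃ c : ℝ, 0 < c ∧ ∀ x, vnormA A (T x) ≤ c * vnormA A x

/-- The `A`-operator seminorm `‖T‖_A = sup{‖Tx‖_A : ‖x‖_A = 1}`. -/
noncomputable def opNormA {H : Type*} [NormedAddCommGroup H] [InnerProductSpace ℂ H]
    (A T : H →L[ℂ] H) : ℝ :=
  sSup {c : ℝ | ∃ x : H, vnormA A x = 1 ∧ c = vnormA A (T x)}

/-- The `A`-numerical radius `ω_A(T) = sup{|⟨ATx, x⟩| : ‖x‖_A = 1}`. -/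
noncomputable def wA {H : Type*} [NormedAddCommGroup H] [InnerProductSpace ℂ H]
    (A T : H →L[ℂ] H) : ℝ :=
  sSup {c : ℝ | ∃ x : H, vnormA A x = 1 ∧ c = ‖(inner ℂ (A (T x)) x : ℂ)‖}

/-- `Ts` is the reduced (Douglas) solution of `AX = T*A`, i.e. `Ts = T^{♯_A}`. -/
def IsReducedAdjoint {H : Type*} [NormedAddCommGroup H] [InnerProductSpace ℂ H]
    [CompleteSpace H] (A T Ts : H →L[ℂ] H) : Prop :=
  A ∘L Ts = (ContinuousLinearMap.adjoint T) ∘L A ∧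
    ∀ y, Ts y ∈ closure (Set.range A)

/-- The `2 × 2` operator matrix `[[P, Q], [R, S]]` acting on `H ⊕ H` (with the `ℓ²` product
inner ℂ product). -/
noncomputable def blk {H : Type*} [NormedAddCommGroup H] [InnerProductSpace ℂ H]
    (P Q R S : H →L[ℂ] H) : WithLp 2 (H × H) →L[ℂ] WithLp 2 (H × H) :=
  letI e := (WithLp.prodContinuousLinearEquiv 2 ℂ H H)
  (e.symm.toContinuousLinearMap) ∘L
    ((P.comp (fst ℂ H H) + Q.comp (snd ℂ H H)).prod
      (R.comp (fst ℂ H H) + S.comp (snd ℂ H H))) ∘L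
    (e.toContinuousLinearMap)

/-- `𝔸 = diag(A, A)` on `H ⊕ H`. -/
noncomputable def AA {H : Type*} [NormedAddCommGroup H] [InnerProductSpace ℂ H]
    (A : H →L[ℂ] H) : WithLp 2 (H × H) →L[ℂ] WithLp 2 (H × H) :=
  blk A 0 0 A

section AuxLemmas

set_option linter.unusedSectionVars false

variable {E : Type*} [NormedAddCommGroup E] [InnerProductSpace ℂ E] [CompleteSpace E]

theorem vnormA_nonneg (A : E →L[ℂ] E) (x : E) : 0 ≤ vnormA A x := Real.sqrt_nonneg _

theorem vnormA_zero (A : E →L[ℂ] E) : vnormA A 0 = 0 := by simp [vnormA]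

theorem vnormA_sq (A : E →L[ℂ] E) (hA : A.IsPositive) (x : E) :
    vnormA A x ^ 2 = RCLike.re (inner ℂ (A x) x : ℂ) := Real.sq_sqrt (hA.2 x)

theorem innerA_symm (A : E →L[ℂ] E) (hA : A.IsPositive) (x y : E) :
    (inner ℂ (A x) y : ℂ) = inner ℂ x (A y) := by
  conv_lhs => rw [← hA.isSelfAdjoint.adjoint_eq]
  exact ContinuousLinearMap.adjoint_inner_left A y x

theorem innerA_conj_symm (A : E →L[ℂ] E) (hA : A.IsPositive) (x y : E) :
    (inner ℂ (A x) y : ℂ) = starRingEnd ℂ (inner ℂ (A y) x : ℂ) := by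
  rw [innerA_symm A hA x y, ← inner_conj_symm]

/-- The positive semidefinite sesquilinear form induced by a positive operator. -/
noncomputable def pCore (A : E →L[ℂ] E) (hA : A.IsPositive) :
    PreInnerProductSpace.Core ℂ E where
  inner x y := inner ℂ (A x) y
  conj_inner_symm x y := by
    show (starRingEnd ℂ) (inner ℂ (A y) x : ℂ) = inner ℂ (A x) y
    rw [innerA_symm A hA, inner_conj_symm]
  re_inner_nonneg x := hA.2 x
  add_left x y z := by
    show (inner ℂ (A (x + y)) z : ℂ) = inner ℂ (A x) z + inner ℂ (A y) z
    rw [map_add, inner_add_left]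
  smul_left x y r := by
    show (inner ℂ (A (r • x)) y : ℂ) = (starRingEnd ℂ) r * inner ℂ (A x) y
    rw [map_smul, inner_smul_left]

theorem csA (A : E →L[ℂ] E) (hA : A.IsPositive) (x y : E) :
    ‖(inner ℂ (A x) y : ℂ)‖ * ‖(inner ℂ (A y) x : ℂ)‖
      ≤ RCLike.re (inner ℂ (A x) x : ℂ) * RCLike.re (inner ℂ (A y) y : ℂ) :=
  @InnerProductSpace.Core.inner_mul_inner_self_le ℂ E _ _ _ (pCore A hA) x y

theorem abs_innerA_le (A : E →L[ℂ] E) (hA : A.IsPositive) (x y : E) :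
    ‖(inner ℂ (A x) y : ℂ)‖ ≤ vnormA A x * vnormA A y := by
  have h := csA A hA x y
  have hsym : ‖(inner ℂ (A y) x : ℂ)‖ = ‖(inner ℂ (A x) y : ℂ)‖ := by
    rw [innerA_conj_symm A hA y x]
    exact RCLike.norm_conj _
  rw [hsym, ← vnormA_sq A hA x, ← vnormA_sq A hA y] at h
  nlinarith [vnormA_nonneg A x, vnormA_nonneg A y, norm_nonneg (inner ℂ (A x) y : ℂ),
    mul_nonneg (vnormA_nonneg A x) (vnormA_nonneg A y)]

theorem vnormA_smul (A : E →L[ℂ] E) (c : ℂ) (x : E) :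
    vnormA A (c • x) = ‖c‖ * vnormA A x := by
  unfold vnormA
  have h : (inner ℂ (A (c • x)) (c • x) : ℂ) = ((‖c‖ ^ 2 : ℝ) : ℂ) * inner ℂ (A x) x := by
    rw [map_smul, inner_smul_left, inner_smul_right, ← mul_assoc, RCLike.conj_mul]
    norm_cast
  have hre : RCLike.re (inner ℂ (A (c • x)) (c • x) : ℂ)
      = ‖c‖ ^ 2 * RCLike.re (inner ℂ (A x) x : ℂ) := by
    rw [h]; simp [← Complex.ofReal_pow]
  rw [hre, Real.sqrt_mul (sq_nonneg _), Real.sqrt_sq (norm_nonneg _)]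

theorem vnormA_neg (A : E →L[ℂ] E) (x : E) : vnormA A (-x) = vnormA A x := by
  simp [vnormA, map_neg, inner_neg_neg]

theorem vnormA_le_norm (A : E →L[ℂ] E) (x : E) :
    vnormA A x ≤ Real.sqrt ‖A‖ * ‖x‖ := by
  unfold vnormA
  have h1 : RCLike.re (inner ℂ (A x) x : ℂ) ≤ ‖A‖ * ‖x‖ ^ 2 := by
    refine le_trans (RCLike.re_le_norm _) (le_trans (norm_inner_le_norm _ _) ?_)
    have := A.le_opNorm x
    nlinarith [norm_nonneg x]
  calc Real.sqrt (RCLike.re (inner ℂ (A x) x : ℂ)) ≤ Real.sqrt (‖A‖ * ‖x‖ ^ 2) :=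
        Real.sqrt_le_sqrt h1
    _ = Real.sqrt ‖A‖ * ‖x‖ := by
        rw [Real.sqrt_mul (norm_nonneg _), Real.sqrt_sq (norm_nonneg _)]

theorem innerA_shift (A : E →L[ℂ] E) (W Ws : E →L[ℂ] E)
    (hW : A ∘L Ws = (ContinuousLinearMap.adjoint W) ∘L A) (u y : E) :
    (inner ℂ (A u) (W y) : ℂ) = inner ℂ (A (Ws u)) y := by
  have h1 : (inner ℂ (A u) (W y) : ℂ) = inner ℂ ((ContinuousLinearMap.adjoint W) (A u)) y :=
    (ContinuousLinearMap.adjoint_inner_left W y (A u)).symm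
  rw [h1, show (ContinuousLinearMap.adjoint W) (A u)
      = ((ContinuousLinearMap.adjoint W) ∘L A) u from rfl, ← hW]
  rfl

theorem innerA_shift' (A : E →L[ℂ] E) (hA : A.IsPositive) (W Ws : E →L[ℂ] E)
    (hW : A ∘L Ws = (ContinuousLinearMap.adjoint W) ∘L A) (u y : E) :
    (inner ℂ (A (W u)) y : ℂ) = starRingEnd ℂ (inner ℂ (A (Ws y)) u : ℂ) := by
  rw [innerA_conj_symm A hA (W u) y, innerA_shift A W Ws hW y u]

end AuxLemmas

section AuxLemmas2

set_option linter.unusedSectionVars false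

open ContinuousLinearMap

variable {E : Type*} [NormedAddCommGroup E] [InnerProductSpace ℂ E] [CompleteSpace E]

theorem adjointA_flip (A : E →L[ℂ] E) (hA : A.IsPositive) {W Ws : E →L[ℂ] E}
    (hW : A ∘L Ws = (adjoint W) ∘L A) : A ∘L W = (adjoint Ws) ∘L A := by
  have h := congrArg adjoint hW
  rw [adjoint_comp, adjoint_comp, adjoint_adjoint, hA.isSelfAdjoint.adjoint_eq] at h
  exact h.symm

theorem normA_selfadj_bound (A : E →L[ℂ] E) (hA : A.IsPositive) (G : E →L[ℂ] E)
    (hG : A ∘L G = (adjoint G) ∘L A) (x : E) :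
    vnormA A (G x) ≤ ‖G‖ * vnormA A x := by
  have hpow : ∀ m : ℕ, A ∘L (G ^ m) = adjoint (G ^ m) ∘L A := by
    intro m
    induction m with
    | zero =>
      rw [pow_zero, show adjoint (1 : E →L[ℂ] E) = 1 by rw [← star_eq_adjoint, star_one]]
      simp [ContinuousLinearMap.one_def]
    | succ k ih =>
      have h1 : G ^ (k+1) = (G ^ k) ∘L G := by rw [pow_succ]; rfl
      have h2 : adjoint (G ^ (k+1)) = adjoint (G ^ k) ∘L adjoint G := by
        rw [show G ^ (k+1) = G ∘L (G ^ k) by rw [pow_succ']; rfl, adjoint_comp]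
      rw [h2, h1, ← comp_assoc, ih, comp_assoc, hG, ← comp_assoc]
  have hsq : ∀ m : ℕ, vnormA A ((G ^ m) x) ^ 2
      = RCLike.re (inner ℂ (A ((G ^ (m + m)) x)) x : ℂ) := by
    intro m
    have hcomp : ((G ^ m) ∘L (G ^ m)) = G ^ (m + m) := by rw [pow_add]; rfl
    rw [vnormA_sq A hA, innerA_shift A (G ^ m) (G ^ m) (hpow m) ((G ^ m) x) x,
      show (G ^ m) ((G ^ m) x) = (G ^ (m + m)) x by rw [← hcomp]; rfl]
  -- the case of vanishing seminorm
  rcases eq_or_lt_of_le (vnormA_nonneg A x) with h0 | hn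
  · have h2 := hsq 1
    have h3 : RCLike.re (inner ℂ (A ((G ^ (1+1)) x)) x : ℂ)
        ≤ vnormA A ((G ^ (1+1)) x) * vnormA A x :=
      le_trans (RCLike.re_le_norm _) (abs_innerA_le A hA _ _)
    rw [← h0, mul_zero] at h3
    have h4 : vnormA A ((G ^ 1) x) ^ 2 ≤ 0 := h2.le.trans h3
    have h5 : vnormA A ((G ^ 1) x) = vnormA A (G x) := by rw [pow_one]
    rw [← h0, mul_zero]
    nlinarith [vnormA_nonneg A ((G ^ 1) x)]
  · by_contra hcon
    push_neg at hcon
    have hGpos : 0 < ‖G‖ := by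
      rcases eq_or_lt_of_le (norm_nonneg G) with hg0 | hg
      · exfalso
        have : G = 0 := by
          rw [← norm_eq_zero]; exact hg0.symm
        rw [this] at hcon
        simp [vnormA_zero] at hcon
      · exact hg
    set a : ℕ → ℝ := fun k => vnormA A ((G ^ (2 ^ k)) x) with ha
    have hann : ∀ k, 0 ≤ a k := fun k => vnormA_nonneg _ _
    have ha0 : a 0 = vnormA A (G x) := by simp [ha, pow_one]
    have key : ∀ k, a k ^ 2 ≤ a (k + 1) * vnormA A x := by
      intro k
      have h1 := hsq (2 ^ k)
      have h2 : (2 : ℕ) ^ k + 2 ^ k = 2 ^ (k + 1) := by rw [pow_succ, mul_two]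
      rw [h2] at h1
      calc a k ^ 2 = RCLike.re (inner ℂ (A ((G ^ (2 ^ (k+1))) x)) x : ℂ) := h1
        _ ≤ ‖(inner ℂ (A ((G ^ (2 ^ (k+1))) x)) x : ℂ)‖ := RCLike.re_le_norm _
        _ ≤ a (k + 1) * vnormA A x := abs_innerA_le A hA _ _
    have iter : ∀ k, a 0 ^ (2 ^ k) * vnormA A x ≤ a k * vnormA A x ^ (2 ^ k) := by
      intro k
      induction k with
      | zero => simp [pow_one]
      | succ k ih =>
        refine le_of_mul_le_mul_right ?_ hn
        calc a 0 ^ 2 ^ (k+1) * vnormA A x * vnormA A x = (a 0 ^ 2 ^ k * vnormA A x) ^ 2 := by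
              rw [pow_succ (2:ℕ) k, pow_mul]; ring
          _ ≤ (a k * vnormA A x ^ 2 ^ k) ^ 2 :=
              pow_le_pow_left₀ (mul_nonneg (pow_nonneg (hann 0) _) hn.le) ih 2
          _ = a k ^ 2 * (vnormA A x ^ 2 ^ k) ^ 2 := by ring
          _ ≤ (a (k+1) * vnormA A x) * (vnormA A x ^ 2 ^ k) ^ 2 :=
              mul_le_mul_of_nonneg_right (key k) (sq_nonneg _)
          _ = a (k+1) * vnormA A x ^ 2 ^ (k+1) * vnormA A x := by
              rw [pow_succ (2:ℕ) k, pow_mul]; ring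
    have hbk : ∀ k, a k ≤ Real.sqrt ‖A‖ * ‖x‖ * ‖G‖ ^ 2 ^ k := by
      intro k
      calc a k ≤ Real.sqrt ‖A‖ * ‖(G ^ 2 ^ k) x‖ := vnormA_le_norm A _
        _ ≤ Real.sqrt ‖A‖ * (‖G ^ 2 ^ k‖ * ‖x‖) :=
            mul_le_mul_of_nonneg_left ((G ^ 2 ^ k).le_opNorm x) (Real.sqrt_nonneg _)
        _ ≤ Real.sqrt ‖A‖ * (‖G‖ ^ 2 ^ k * ‖x‖) := by
            refine mul_le_mul_of_nonneg_left ?_ (Real.sqrt_nonneg _)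
            exact mul_le_mul_of_nonneg_right (norm_pow_le' G (pow_pos (by norm_num) k))
              (norm_nonneg x)
        _ = Real.sqrt ‖A‖ * ‖x‖ * ‖G‖ ^ 2 ^ k := by ring
    set r : ℝ := a 0 / (‖G‖ * vnormA A x) with hrdef
    have hr1 : 1 < r := by
      rw [hrdef]
      rw [lt_div_iff₀ (mul_pos hGpos hn), one_mul, ha0]
      exact hcon
    have hCk : ∀ k, r ^ 2 ^ k ≤ Real.sqrt ‖A‖ * ‖x‖ / vnormA A x := by
      intro k
      rw [hrdef, div_pow, div_le_div_iff₀ (pow_pos (mul_pos hGpos hn) _) hn]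
      calc a 0 ^ 2 ^ k * vnormA A x ≤ a k * vnormA A x ^ 2 ^ k := iter k
        _ ≤ (Real.sqrt ‖A‖ * ‖x‖ * ‖G‖ ^ 2 ^ k) * vnormA A x ^ 2 ^ k :=
            mul_le_mul_of_nonneg_right (hbk k) (pow_nonneg hn.le _)
        _ = Real.sqrt ‖A‖ * ‖x‖ * (‖G‖ * vnormA A x) ^ 2 ^ k := by rw [mul_pow]; ring
    obtain ⟨M, hM⟩ := pow_unbounded_of_one_lt (Real.sqrt ‖A‖ * ‖x‖ / vnormA A x) hr1
    have h5 : r ^ M ≤ r ^ 2 ^ M := pow_le_pow_right₀ hr1.le (Nat.lt_two_pow_self (n := M)).le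
    linarith [hCk M]

theorem normA_crude (A : E →L[ℂ] E) (hA : A.IsPositive) (W Ws : E →L[ℂ] E)
    (hW : A ∘L Ws = (adjoint W) ∘L A) (y : E) :
    vnormA A (W y) ≤ Real.sqrt ‖Ws ∘L W‖ * vnormA A y := by
  have hGrel : A ∘L (Ws ∘L W) = adjoint (Ws ∘L W) ∘L A := by
    have h : adjoint (Ws ∘L W) ∘L A = A ∘L (Ws ∘L W) := by
      rw [adjoint_comp, comp_assoc, ← adjointA_flip A hA hW, ← comp_assoc, ← hW, comp_assoc]
    exact h.symm
  have h2 : vnormA A (W y) ^ 2 = RCLike.re (inner ℂ (A ((Ws ∘L W) y)) y : ℂ) := by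
    rw [vnormA_sq A hA, innerA_shift A W Ws hW (W y) y]; rfl
  have h3 : RCLike.re (inner ℂ (A ((Ws ∘L W) y)) y : ℂ) ≤ ‖Ws ∘L W‖ * vnormA A y * vnormA A y := by
    calc RCLike.re (inner ℂ (A ((Ws ∘L W) y)) y : ℂ) ≤ ‖(inner ℂ (A ((Ws ∘L W) y)) y : ℂ)‖ :=
          RCLike.re_le_norm _
      _ ≤ vnormA A ((Ws ∘L W) y) * vnormA A y := abs_innerA_le A hA _ _
      _ ≤ ‖Ws ∘L W‖ * vnormA A y * vnormA A y := by
          refine mul_le_mul_of_nonneg_right ?_ (vnormA_nonneg A y)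
          exact normA_selfadj_bound A hA _ hGrel y
  have h4 : vnormA A (W y) ^ 2 ≤ (Real.sqrt ‖Ws ∘L W‖ * vnormA A y) ^ 2 := by
    rw [mul_pow, Real.sq_sqrt (norm_nonneg _)]
    calc vnormA A (W y) ^ 2 ≤ ‖Ws ∘L W‖ * vnormA A y * vnormA A y := h2 ▸ h3
      _ = ‖Ws ∘L W‖ * vnormA A y ^ 2 := by ring
  calc vnormA A (W y) = Real.sqrt (vnormA A (W y) ^ 2) :=
        (Real.sqrt_sq (vnormA_nonneg A _)).symm
    _ ≤ Real.sqrt ((Real.sqrt ‖Ws ∘L W‖ * vnormA A y) ^ 2) := Real.sqrt_le_sqrt h4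
    _ = Real.sqrt ‖Ws ∘L W‖ * vnormA A y := Real.sqrt_sq
        (mul_nonneg (Real.sqrt_nonneg _) (vnormA_nonneg A y))

theorem opNormA_nonneg (A T : E →L[ℂ] E) : 0 ≤ opNormA A T := by
  apply Real.sSup_nonneg
  rintro c ⟨x, hx, rfl⟩
  exact vnormA_nonneg A _

theorem wA_nonneg (A T : E →L[ℂ] E) : 0 ≤ wA A T := by
  apply Real.sSup_nonneg
  rintro c ⟨x, hx, rfl⟩
  exact norm_nonneg _

theorem normA_le_opNormA (A : E →L[ℂ] E) (hA : A.IsPositive) (W Ws : E →L[ℂ] E)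
    (hW : A ∘L Ws = (adjoint W) ∘L A) (x : E) :
    vnormA A (W x) ≤ opNormA A W * vnormA A x := by
  have hbdd : BddAbove {c : ℝ | ∃ x : E, vnormA A x = 1 ∧ c = vnormA A (W x)} := by
    refine ⟨Real.sqrt ‖Ws ∘L W‖, ?_⟩
    rintro c ⟨y, hy, rfl⟩
    simpa [hy] using normA_crude A hA W Ws hW y
  rcases eq_or_lt_of_le (vnormA_nonneg A x) with h0 | hpos
  · have h := normA_crude A hA W Ws hW x
    rw [← h0, mul_zero] at h ⊢
    exact h
  · set t := vnormA A x with ht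
    have hy : vnormA A (((t : ℂ))⁻¹ • x) = 1 := by
      rw [vnormA_smul, norm_inv, Complex.norm_real, Real.norm_eq_abs, abs_of_pos hpos, ← ht]
      field_simp
    have hmem : vnormA A (W (((t : ℂ))⁻¹ • x)) ∈
        {c : ℝ | ∃ x : E, vnormA A x = 1 ∧ c = vnormA A (W x)} := ⟨_, hy, rfl⟩
    have hle := le_csSup hbdd hmem
    have hW2 : vnormA A (W (((t : ℂ))⁻¹ • x)) = t⁻¹ * vnormA A (W x) := by
      rw [map_smul, vnormA_smul, norm_inv, Complex.norm_real, Real.norm_eq_abs, abs_of_pos hpos]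
    rw [hW2] at hle
    calc vnormA A (W x) = t * (t⁻¹ * vnormA A (W x)) := by field_simp
      _ ≤ t * opNormA A W := mul_le_mul_of_nonneg_left hle hpos.le
      _ = opNormA A W * t := by ring

theorem abs_inner_le_wA (A : E →L[ℂ] E) (hA : A.IsPositive) (T Ts : E →L[ℂ] E)
    (hT : A ∘L Ts = (adjoint T) ∘L A) (x : E) :
    ‖(inner ℂ (A (T x)) x : ℂ)‖ ≤ wA A T * vnormA A x ^ 2 := by
  have hbdd : BddAbove {c : ℝ | ∃ x : E, vnormA A x = 1 ∧
      c = ‖(inner ℂ (A (T x)) x : ℂ)‖} := by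
    refine ⟨Real.sqrt ‖Ts ∘L T‖, ?_⟩
    rintro c ⟨y, hy, rfl⟩
    calc ‖(inner ℂ (A (T y)) y : ℂ)‖ ≤ vnormA A (T y) * vnormA A y := abs_innerA_le A hA _ _
      _ ≤ (Real.sqrt ‖Ts ∘L T‖ * vnormA A y) * vnormA A y :=
          mul_le_mul_of_nonneg_right (normA_crude A hA T Ts hT y) (vnormA_nonneg A y)
      _ = Real.sqrt ‖Ts ∘L T‖ := by rw [hy]; ring
  rcases eq_or_lt_of_le (vnormA_nonneg A x) with h0 | hpos
  · have h := abs_innerA_le A hA (T x) x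
    rw [← h0, mul_zero] at h
    rw [← h0]
    simpa using h
  · set t := vnormA A x with ht
    set y := ((t : ℂ))⁻¹ • x with hydef
    have hy : vnormA A y = 1 := by
      rw [hydef, vnormA_smul, norm_inv, Complex.norm_real, Real.norm_eq_abs, abs_of_pos hpos, ← ht]
      field_simp
    have hmem : ‖(inner ℂ (A (T y)) y : ℂ)‖ ∈
        {c : ℝ | ∃ x : E, vnormA A x = 1 ∧ c = ‖(inner ℂ (A (T x)) x : ℂ)‖} :=
      ⟨y, hy, rfl⟩
    have hle := le_csSup hbdd hmem
    have hval : ‖(inner ℂ (A (T y)) y : ℂ)‖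
        = (t⁻¹) ^ 2 * ‖(inner ℂ (A (T x)) x : ℂ)‖ := by
      rw [hydef, map_smul, map_smul, inner_smul_left, inner_smul_right,
        norm_mul, norm_mul, RCLike.norm_conj, norm_inv, Complex.norm_real, Real.norm_eq_abs,
        abs_of_pos hpos]
      ring
    rw [hval] at hle
    have ht2 : 0 < t ^ 2 := pow_pos hpos 2
    calc ‖(inner ℂ (A (T x)) x : ℂ)‖ = t ^ 2 * ((t⁻¹) ^ 2 * ‖(inner ℂ (A (T x)) x : ℂ)‖) := by
          field_simp
      _ ≤ t ^ 2 * wA A T := mul_le_mul_of_nonneg_left hle ht2.le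
      _ = wA A T * t ^ 2 := by ring

end AuxLemmas2

section AuxLemmas3

set_option linter.unusedSectionVars false

open ContinuousLinearMap

variable {H : Type*} [NormedAddCommGroup H] [InnerProductSpace ℂ H] [CompleteSpace H]

theorem blk_fst (P Q R S : H →L[ℂ] H) (x : WithLp 2 (H × H)) :
    ((blk P Q R S) x).fst = P x.fst + Q x.snd := rfl

theorem blk_snd (P Q R S : H →L[ℂ] H) (x : WithLp 2 (H × H)) :
    ((blk P Q R S) x).snd = R x.fst + S x.snd := rfl

theorem AA_fst (A : H →L[ℂ] H) (x : WithLp 2 (H × H)) :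
    ((AA A) x).fst = A x.fst := by
  rw [show AA A = blk A 0 0 A from rfl, blk_fst]
  simp

theorem AA_snd (A : H →L[ℂ] H) (x : WithLp 2 (H × H)) :
    ((AA A) x).snd = A x.snd := by
  rw [show AA A = blk A 0 0 A from rfl, blk_snd]
  simp

theorem innerAA (A : H →L[ℂ] H) (u v : WithLp 2 (H × H)) :
    (inner ℂ ((AA A) u) v : ℂ) = inner ℂ (A u.fst) v.fst + inner ℂ (A u.snd) v.snd := by
  rw [WithLp.prod_inner_apply, ← AA_fst, ← AA_snd]
  rfl

theorem AA_pos (A : H →L[ℂ] H) (hA : A.IsPositive) : (AA A).IsPositive := by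
  constructor
  · intro u v
    show inner ℂ ((AA A) u) v = inner ℂ u ((AA A) v)
    rw [innerAA, WithLp.prod_inner_apply, innerA_symm A hA u.fst v.fst,
      innerA_symm A hA u.snd v.snd, ← AA_fst, ← AA_snd]
    rfl
  · intro z
    show 0 ≤ RCLike.re (inner ℂ ((AA A) z) z : ℂ)
    rw [innerAA, map_add]
    exact add_nonneg (hA.2 z.fst) (hA.2 z.snd)

theorem vnormA_AA_sq (A : H →L[ℂ] H) (hA : A.IsPositive) (x : WithLp 2 (H × H)) :
    vnormA (AA A) x ^ 2 = vnormA A x.fst ^ 2 + vnormA A x.snd ^ 2 := by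
  rw [vnormA_sq (AA A) (AA_pos A hA), innerAA, map_add,
    vnormA_sq A hA, vnormA_sq A hA]

theorem wA_neg (A T : H →L[ℂ] H) : wA A (-T) = wA A T := by
  unfold wA
  congr 1
  ext c
  constructor
  · rintro ⟨x, hx, rfl⟩
    exact ⟨x, hx, by simp [ContinuousLinearMap.neg_apply]⟩
  · rintro ⟨x, hx, rfl⟩
    exact ⟨x, hx, by simp [ContinuousLinearMap.neg_apply]⟩

/-- The key estimate. -/
theorem key_est (A : H →L[ℂ] H) (hA : A.IsPositive) (P Q Ps Qs : H →L[ℂ] H)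
    (hPs : A ∘L Ps = (adjoint P) ∘L A) (hQs : A ∘L Qs = (adjoint Q) ∘L A)
    (x : WithLp 2 (H × H)) (hx : vnormA (AA A) x = 1) :
    ‖(inner ℂ (A (P x.fst + Q x.snd)) x.fst : ℂ)‖ ^ 2
      ≤ opNormA A (P + Q) ^ 2 + 2 * wA A (P ∘L Qs) := by
  have hUs : A ∘L (Ps + Qs) = (adjoint (P + Q)) ∘L A := by
    have hadj : adjoint (P + Q) = adjoint P + adjoint Q := by
      rw [← star_eq_adjoint, ← star_eq_adjoint, ← star_eq_adjoint, star_add]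
    rw [comp_add, hPs, hQs, hadj, add_comp]
  -- the pair (Ps x₁, Qs x₁)
  set x' : WithLp 2 (H × H) := (WithLp.equiv 2 (H × H)).symm (Ps x.fst, Qs x.fst) with hx'
  have hx'f : x'.fst = Ps x.fst := rfl
  have hx's : x'.snd = Qs x.fst := rfl
  -- n₁ ≤ 1
  have h1 : vnormA A x.fst ^ 2 + vnormA A x.snd ^ 2 = 1 := by
    rw [← vnormA_AA_sq A hA, hx]; norm_num
  have hn1 : vnormA A x.fst ^ 2 ≤ 1 := by nlinarith [sq_nonneg (vnormA A x.snd)]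
  -- the value equals the conjugate of ⟪AA x', x⟫
  have hv : (inner ℂ (A (P x.fst + Q x.snd)) x.fst : ℂ)
      = starRingEnd ℂ (inner ℂ ((AA A) x') x : ℂ) := by
    rw [innerAA, hx'f, hx's, map_add, inner_add_left, map_add,
      innerA_shift' A hA P Ps hPs x.fst x.fst, innerA_shift' A hA Q Qs hQs x.snd x.fst]
  -- Cauchy-Schwarz on the product space
  have hcs : ‖(inner ℂ (A (P x.fst + Q x.snd)) x.fst : ℂ)‖ ≤ vnormA (AA A) x' := by
    rw [hv, RCLike.norm_conj]
    calc ‖(inner ℂ ((AA A) x') x : ℂ)‖ ≤ vnormA (AA A) x' * vnormA (AA A) x :=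
          abs_innerA_le (AA A) (AA_pos A hA) x' x
      _ = vnormA (AA A) x' := by rw [hx, mul_one]
  -- the decomposition of vnormA (AA A) x' ^ 2
  set z : ℂ := inner ℂ (A (Ps x.fst)) (Qs x.fst) with hz
  have hdec : vnormA (AA A) x' ^ 2
      = vnormA A ((Ps + Qs) x.fst) ^ 2 - 2 * RCLike.re z := by
    have hexp : vnormA A ((Ps + Qs) x.fst) ^ 2
        = vnormA A (Ps x.fst) ^ 2 + vnormA A (Qs x.fst) ^ 2 + 2 * RCLike.re z := by
      rw [vnormA_sq A hA, vnormA_sq A hA, vnormA_sq A hA]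
      rw [show (Ps + Qs) x.fst = Ps x.fst + Qs x.fst from rfl]
      rw [map_add, inner_add_left, inner_add_right, inner_add_right, map_add, map_add]
      have hconj : (inner ℂ (A (Qs x.fst)) (Ps x.fst) : ℂ) = starRingEnd ℂ z := by
        rw [hz, innerA_conj_symm A hA]
      rw [hconj]
      have : RCLike.re (starRingEnd ℂ z) = RCLike.re z := RCLike.conj_re z
      rw [map_add, this]
      ring
    rw [vnormA_AA_sq A hA, hx'f, hx's]
    linarith [hexp]
  -- re z equals re ⟪A ((P ∘L Qs) x₁), x₁⟫
  have hrez : RCLike.re z = RCLike.re (inner ℂ (A ((P ∘L Qs) x.fst)) x.fst : ℂ) := by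
    have h := innerA_shift' A hA P Ps hPs (Qs x.fst) x.fst
    rw [show (P ∘L Qs) x.fst = P (Qs x.fst) from rfl, h, hz, RCLike.conj_re]
  -- bound the first term
  have hfirst : vnormA A ((Ps + Qs) x.fst) ^ 2 ≤ opNormA A (P + Q) ^ 2 := by
    have hUrel2 : A ∘L (P + Q) = adjoint (Ps + Qs) ∘L A := adjointA_flip A hA hUs
    set t := vnormA A ((Ps + Qs) x.fst) with htdef
    have htn : 0 ≤ t := vnormA_nonneg A _
    have hNn : 0 ≤ opNormA A (P + Q) := opNormA_nonneg A _
    have ht2 : t ^ 2 ≤ opNormA A (P + Q) * t := by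
      have e1 : t ^ 2 = RCLike.re (inner ℂ (A ((P + Q) ((Ps + Qs) x.fst))) x.fst : ℂ) := by
        rw [htdef, vnormA_sq A hA,
          innerA_shift A (Ps + Qs) (P + Q) hUrel2 ((Ps + Qs) x.fst) x.fst]
      have e2 : RCLike.re (inner ℂ (A ((P + Q) ((Ps + Qs) x.fst))) x.fst : ℂ)
          ≤ vnormA A ((P + Q) ((Ps + Qs) x.fst)) * vnormA A x.fst :=
        le_trans (RCLike.re_le_norm _) (abs_innerA_le A hA _ _)
      have e3 : vnormA A ((P + Q) ((Ps + Qs) x.fst))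
          ≤ opNormA A (P + Q) * t := normA_le_opNormA A hA (P + Q) (Ps + Qs) hUs _
      have e4 : vnormA A x.fst ≤ 1 := by
        nlinarith [vnormA_nonneg A x.fst]
      calc t ^ 2 ≤ vnormA A ((P + Q) ((Ps + Qs) x.fst)) * vnormA A x.fst := e1 ▸ e2
        _ ≤ (opNormA A (P + Q) * t) * 1 :=
            mul_le_mul e3 e4 (vnormA_nonneg A _) (by positivity)
        _ = opNormA A (P + Q) * t := by ring
    have ht3 : t ≤ opNormA A (P + Q) := by
      rcases eq_or_lt_of_le htn with h0 | hpos
      · rw [← h0]; exact hNn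
      · nlinarith
    exact pow_le_pow_left₀ htn ht3 2
  -- bound the cross term
  have hcross : -(2 * RCLike.re z) ≤ 2 * wA A (P ∘L Qs) := by
    have hTrel : A ∘L (Q ∘L Ps) = adjoint (P ∘L Qs) ∘L A := by
      have h : adjoint (P ∘L Qs) ∘L A = A ∘L (Q ∘L Ps) := by
        rw [adjoint_comp, comp_assoc, ← hPs, ← comp_assoc, ← adjointA_flip A hA hQs, comp_assoc]
      exact h.symm
    have h1' : ‖(inner ℂ (A ((P ∘L Qs) x.fst)) x.fst : ℂ)‖ ≤ wA A (P ∘L Qs) := by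
      calc ‖(inner ℂ (A ((P ∘L Qs) x.fst)) x.fst : ℂ)‖
          ≤ wA A (P ∘L Qs) * vnormA A x.fst ^ 2 := abs_inner_le_wA A hA _ (Q ∘L Ps) hTrel x.fst
        _ ≤ wA A (P ∘L Qs) * 1 := mul_le_mul_of_nonneg_left hn1 (wA_nonneg A _)
        _ = wA A (P ∘L Qs) := mul_one _
    have h2' : -(RCLike.re z) ≤ ‖(inner ℂ (A ((P ∘L Qs) x.fst)) x.fst : ℂ)‖ := by
      rw [hrez]
      calc -(RCLike.re (inner ℂ (A ((P ∘L Qs) x.fst)) x.fst : ℂ))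
          ≤ |RCLike.re (inner ℂ (A ((P ∘L Qs) x.fst)) x.fst : ℂ)| := neg_le_abs _
        _ ≤ ‖(inner ℂ (A ((P ∘L Qs) x.fst)) x.fst : ℂ)‖ := RCLike.abs_re_le_norm _
    linarith
  -- put everything together
  calc ‖(inner ℂ (A (P x.fst + Q x.snd)) x.fst : ℂ)‖ ^ 2 ≤ vnormA (AA A) x' ^ 2 :=
        pow_le_pow_left₀ (norm_nonneg _) hcs 2
    _ = vnormA A ((Ps + Qs) x.fst) ^ 2 - 2 * RCLike.re z := hdec
    _ ≤ opNormA A (P + Q) ^ 2 + 2 * wA A (P ∘L Qs) := by linarith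

end AuxLemmas3


theorem stmt11 {H : Type*} [NormedAddCommGroup H] [InnerProductSpace ℂ H] [CompleteSpace H]
    (A : H →L[ℂ] H) (hA : A.IsPositive)
    (P Q Qs : H →L[ℂ] H) (hP : ∃ Ps, IsReducedAdjoint A P Ps)
    (hQ : IsReducedAdjoint A Q Qs) :
    wA (AA A) (blk P Q 0 0) ≤
      Real.sqrt (min ((opNormA A (P + Q)) ^ 2) ((opNormA A (P - Q)) ^ 2) +
        2 * wA A (P ∘L Qs)) := by
  obtain ⟨Ps, hPs, -⟩ := hP
  obtain ⟨hQs, -⟩ := hQ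
  apply Real.sSup_le _ (Real.sqrt_nonneg _)
  rintro c ⟨x, hx, rfl⟩
  have hval : (inner ℂ ((AA A) ((blk P Q 0 0) x)) x : ℂ)
      = inner ℂ (A (P x.fst + Q x.snd)) x.fst := by
    rw [innerAA, blk_fst, blk_snd]
    simp
  have hplus := key_est A hA P Q Ps Qs hPs hQs x hx
  have hQs' : A ∘L (-Qs) = (ContinuousLinearMap.adjoint (-Q)) ∘L A := by
    rw [ContinuousLinearMap.comp_neg, hQs, ← ContinuousLinearMap.neg_comp,
      ← ContinuousLinearMap.star_eq_adjoint, ← ContinuousLinearMap.star_eq_adjoint, star_neg]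
  set x'' : WithLp 2 (H × H) := (WithLp.equiv 2 (H × H)).symm (x.fst, -x.snd) with hx''def
  have hx''f : x''.fst = x.fst := rfl
  have hx''s : x''.snd = -x.snd := rfl
  have hx'' : vnormA (AA A) x'' = 1 := by
    have hsq : vnormA (AA A) x'' ^ 2 = 1 := by
      rw [vnormA_AA_sq A hA, hx''f, hx''s, vnormA_neg, ← vnormA_AA_sq A hA, hx]
      norm_num
    calc vnormA (AA A) x'' = Real.sqrt (vnormA (AA A) x'' ^ 2) :=
          (Real.sqrt_sq (vnormA_nonneg _ _)).symm
      _ = 1 := by rw [hsq, Real.sqrt_one]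
  have hminus := key_est A hA P (-Q) Ps (-Qs) hPs hQs' x'' hx''
  have harg : P x''.fst + (-Q) x''.snd = P x.fst + Q x.snd := by
    rw [hx''f, hx''s]
    simp [ContinuousLinearMap.neg_apply]
  rw [harg, hx''f] at hminus
  rw [show P + -Q = P - Q from (sub_eq_add_neg P Q).symm] at hminus
  rw [show P ∘L (-Qs) = -(P ∘L Qs) from by rw [ContinuousLinearMap.comp_neg], wA_neg] at hminus
  have habs : ‖(inner ℂ ((AA A) ((blk P Q 0 0) x)) x : ℂ)‖
      = ‖(inner ℂ (A (P x.fst + Q x.snd)) x.fst : ℂ)‖ := by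
    rw [hval]
  rw [habs]
  have hmin : ‖(inner ℂ (A (P x.fst + Q x.snd)) x.fst : ℂ)‖ ^ 2
      ≤ min (opNormA A (P + Q) ^ 2) (opNormA A (P - Q) ^ 2) + 2 * wA A (P ∘L Qs) := by
    rcases le_total (opNormA A (P + Q) ^ 2) (opNormA A (P - Q) ^ 2) with h | h
    · rw [min_eq_left h]; exact hplus
    · rw [min_eq_right h]; exact hminus
  calc ‖(inner ℂ (A (P x.fst + Q x.snd)) x.fst : ℂ)‖
      = Real.sqrt (‖(inner ℂ (A (P x.fst + Q x.snd)) x.fst : ℂ)‖ ^ 2) :=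
        (Real.sqrt_sq (norm_nonneg _)).symm
    _ ≤ Real.sqrt (min (opNormA A (P + Q) ^ 2) (opNormA A (P - Q) ^ 2)
        + 2 * wA A (P ∘L Qs)) := Real.sqrt_le_sqrt hmin
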